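/- Let I be a finite nonempty index set, and for each i ∈ I let λT_i, μT_i, λA_i, μA_i, λr_i, μr_i > 0 be reals and c_i ≥ 1 a natural number with λT_i < μT_i, λA_i < μA_i, and λr_i < c_i·μr_i. Define f_i : ℕ³ → ℝ by f_i(xT, xA, x) = (λT_i/μT_i)^{xT} (λA_i/μA_i)^{xA} g_i(x), with g_i(x) = (λr_i/μr_i)^x/x! for x < c_i and g_i(x) = (λr_i/μr_i)^x/(c_i^{x−c_i} c_i!) for x ≥ c_i. Then the family X ↦ ∏_{i∈I} f_i(X_i), defined on states X : I → ℕ³, is summable, its total sum equals ∏_{i∈I} [ (1 − λT_i/μT_i)^{-1}(1 − λA_i/μA_i)^{-1}( μr_i·(λr_i/μr_i)^{c_i}/((c_i−1)!(c_i·μr_i − λr_i)) + Σ_{n=0}^{c_i−1}(λr_i/μr_i)^n/n! ) ], and hence X ↦ π(φ)·∏_{i∈I} f_i(X_i) is a probability distribution on (ℕ³)^I, where π(φ) is the reciprocal of this product. -/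

import Mathlib

/-- The unnormalized M/M/c stationary occupancy weight:
`g(x) = (λ/μ)^x / x!` for `x < c` and `g(x) = (λ/μ)^x / (c^{x-c} · c!)` for `x ≥ c`. -/
noncomputable def mmcWeight (lam mu : ℝ) (c : ℕ) (x : ℕ) : ℝ :=
  if x < c then (lam / mu) ^ x / (Nat.factorial x : ℝ)
  else (lam / mu) ^ x / ((c : ℝ) ^ (x - c) * (Nat.factorial c : ℝ))

/-- The product-form stationary weight of one spatial unit's subnetwork at state
`(xT, xA, x) : ℕ × ℕ × ℕ`. -/
noncomputable def unitWeight (lamT muT lamA muA lamr mur : ℝ) (c : ℕ)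
    (p : ℕ × ℕ × ℕ) : ℝ :=
  (lamT / muT) ^ p.1 * (lamA / muA) ^ p.2.1 * mmcWeight lamr mur c p.2.2


open Finset in
private lemma hasSum_mul_prod' {α β : Type*} {f : α → ℝ} {g : β → ℝ} {s t : ℝ}
    (hf : HasSum f s) (hg : HasSum g t) :
    HasSum (fun p : α × β => f p.1 * g p.2) (s * t) :=
  hf.mul hg (summable_mul_of_summable_norm (summable_norm_iff.mpr hf.summable)
    (summable_norm_iff.mpr hg.summable))

private lemma hasSum_pi' {γ : Type*} : ∀ (ι : Type u) [Fintype ι],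
    ∀ (f : ι → γ → ℝ) (S : ι → ℝ), (∀ i, HasSum (f i) (S i)) →
    HasSum (fun X : ι → γ => ∏ i, f i (X i)) (∏ i, S i) := by
  refine Fintype.induction_empty_option ?_ ?_ ?_
  · intro α β _ e IH f S h
    letI : Fintype α := Fintype.ofEquiv β e.symm
    have key := IH (fun a => f (e a)) (fun a => S (e a)) (fun a => h (e a))
    rw [Equiv.prod_comp e S] at key
    rw [← (e.arrowCongr (Equiv.refl γ)).hasSum_iff]
    have hfun : ((fun X : β → γ => ∏ i : β, f i (X i)) ∘ (e.arrowCongr (Equiv.refl γ)))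
        = fun X : α → γ => ∏ a : α, f (e a) (X a) := by
      funext X
      simp only [Function.comp_apply]
      rw [← Equiv.prod_comp e (fun i => f i ((e.arrowCongr (Equiv.refl γ)) X i))]
      exact Fintype.prod_congr _ _ (fun a => by simp [Equiv.arrowCongr])
    rw [hfun]
    exact key
  · intro f S h
    simpa using hasSum_unique (fun X : PEmpty → γ => ∏ i, f i (X i))
  · intro α _ IH f S h
    have h1 := hasSum_mul_prod' (h none)
      (IH (fun a => f (some a)) (fun a => S (some a)) (fun a => h (some a)))
    rw [Fintype.prod_option,
      ← (Equiv.piOptionEquivProd (β := fun _ : Option α => γ)).symm.hasSum_iff]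
    convert h1 using 1
    funext p
    simp [Equiv.piOptionEquivProd, Fintype.prod_option]

private lemma mmc_hasSum' {lam mu : ℝ} {c : ℕ} (hlam : 0 < lam) (hmu : 0 < mu)
    (hc : 1 ≤ c) (hcm : lam < c * mu) :
    HasSum (mmcWeight lam mu c)
      (mu * (lam / mu) ^ c / ((Nat.factorial (c - 1) : ℝ) * (c * mu - lam)) +
        ∑ n ∈ Finset.range c, (lam / mu) ^ n / (Nat.factorial n : ℝ)) := by
  have hr0 : 0 < lam / mu := div_pos hlam hmu
  have hcpos : (0 : ℝ) < c := by exact_mod_cast Nat.lt_of_lt_of_le Nat.zero_lt_one hc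
  have hsub : (0 : ℝ) < c * mu - lam := by linarith
  have hrc : lam / mu / c < 1 := by
    rw [div_lt_one hcpos, div_lt_iff₀ hmu]; linarith
  have hgeo : HasSum (fun n : ℕ => (lam / mu / c) ^ n) (1 - lam / mu / c)⁻¹ :=
    hasSum_geometric_of_lt_one (by positivity) hrc
  have htail : HasSum (fun n : ℕ => mmcWeight lam mu c (n + c))
      ((lam / mu) ^ c / (Nat.factorial c : ℝ) * (1 - lam / mu / c)⁻¹) := by
    have h2 := hgeo.mul_left ((lam / mu) ^ c / (Nat.factorial c : ℝ))
    refine (congrArg (HasSum · _) ?_).mpr h2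
    funext n
    have hfc : (Nat.factorial c : ℝ) ≠ 0 := Nat.cast_ne_zero.mpr (Nat.factorial_ne_zero c)
    simp only [mmcWeight, if_neg (by omega : ¬ n + c < c), Nat.add_sub_cancel,
      pow_add, div_pow]
    field_simp
  rw [hasSum_nat_add_iff] at htail
  have hsum : ∑ i ∈ Finset.range c, mmcWeight lam mu c i
      = ∑ n ∈ Finset.range c, (lam / mu) ^ n / (Nat.factorial n : ℝ) := by
    refine Finset.sum_congr rfl fun i hi => ?_
    rw [mmcWeight, if_pos (Finset.mem_range.mp hi)]
  rw [hsum] at htail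
  have hval : (lam / mu) ^ c / (Nat.factorial c : ℝ) * (1 - lam / mu / c)⁻¹
      = mu * (lam / mu) ^ c / ((Nat.factorial (c - 1) : ℝ) * (c * mu - lam)) := by
    have hfac : ((c : ℝ)) * (Nat.factorial (c - 1) : ℝ) = (Nat.factorial c : ℝ) := by
      exact_mod_cast Nat.mul_factorial_pred (Nat.pos_iff_ne_zero.mp (Nat.lt_of_lt_of_le Nat.zero_lt_one hc))
    have hfc1 : (Nat.factorial (c - 1) : ℝ) ≠ 0 := Nat.cast_ne_zero.mpr (Nat.factorial_ne_zero _)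
    have h1 : (1 - lam / mu / c) = (c * mu - lam) / (c * mu) := by
      field_simp
    rw [h1, ← hfac]
    have hcmu : (c : ℝ) * mu ≠ 0 := by positivity
    field_simp
  rwa [hval] at htail

private lemma unit_hasSum' {lamT muT lamA muA lamr mur : ℝ} {c : ℕ}
    (hlamT : 0 < lamT) (hmuT : 0 < muT) (hlamA : 0 < lamA) (hmuA : 0 < muA)
    (hlamr : 0 < lamr) (hmur : 0 < mur) (hc : 1 ≤ c)
    (hT : lamT < muT) (hA : lamA < muA) (hr : lamr < c * mur) :
    HasSum (unitWeight lamT muT lamA muA lamr mur c)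
      ((1 - lamT / muT)⁻¹ * (1 - lamA / muA)⁻¹ *
        (mur * (lamr / mur) ^ c / ((Nat.factorial (c - 1) : ℝ) * (c * mur - lamr)) +
          ∑ n ∈ Finset.range c, (lamr / mur) ^ n / (Nat.factorial n : ℝ))) := by
  have hgT : HasSum (fun n : ℕ => (lamT / muT) ^ n) (1 - lamT / muT)⁻¹ :=
    hasSum_geometric_of_lt_one (by positivity) ((div_lt_one hmuT).mpr hT)
  have hgA : HasSum (fun n : ℕ => (lamA / muA) ^ n) (1 - lamA / muA)⁻¹ :=
    hasSum_geometric_of_lt_one (by positivity) ((div_lt_one hmuA).mpr hA)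
  have hmmc := mmc_hasSum' hlamr hmur hc hr
  have h := hasSum_mul_prod' hgT (hasSum_mul_prod' hgA hmmc)
  convert h using 1
  · funext p
    simp only [unitWeight]
    ring
  · ring

/-- for a finite nonempty collection of spatial units, each satisfying the
stability conditions, the network product-form family `X ↦ ∏_i f_i(X_i)` is summable over
states `X : I → ℕ³`, its total sum is the product over `i ∈ I` of the per-unit normalizing
constants, and the normalized family is a probability distribution on `(ℕ³)^I`. -/
theorem network_product_form_normalization
    {I : Type*} [Fintype I] [Nonempty I]
    (lamT muT lamA muA lamr mur : I → ℝ) (c : I → ℕ)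
    (hlamT : ∀ i, 0 < lamT i) (hmuT : ∀ i, 0 < muT i)
    (hlamA : ∀ i, 0 < lamA i) (hmuA : ∀ i, 0 < muA i)
    (hlamr : ∀ i, 0 < lamr i) (hmur : ∀ i, 0 < mur i)
    (hc : ∀ i, 1 ≤ c i)
    (hT : ∀ i, lamT i < muT i) (hA : ∀ i, lamA i < muA i)
    (hr : ∀ i, lamr i < c i * mur i) :
    Summable (fun X : I → ℕ × ℕ × ℕ =>
      ∏ i, unitWeight (lamT i) (muT i) (lamA i) (muA i) (lamr i) (mur i) (c i) (X i)) ∧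
    (∑' X : I → ℕ × ℕ × ℕ,
        ∏ i, unitWeight (lamT i) (muT i) (lamA i) (muA i) (lamr i) (mur i) (c i) (X i)) =
      ∏ i, ((1 - lamT i / muT i)⁻¹ * (1 - lamA i / muA i)⁻¹ *
        (mur i * (lamr i / mur i) ^ c i /
            ((Nat.factorial (c i - 1) : ℝ) * (c i * mur i - lamr i)) +
          ∑ n ∈ Finset.range (c i), (lamr i / mur i) ^ n / (Nat.factorial n : ℝ))) ∧
    ∑' X : I → ℕ × ℕ × ℕ,
        (∏ i, ((1 - lamT i / muT i)⁻¹ * (1 - lamA i / muA i)⁻¹ *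
          (mur i * (lamr i / mur i) ^ c i /
              ((Nat.factorial (c i - 1) : ℝ) * (c i * mur i - lamr i)) +
            ∑ n ∈ Finset.range (c i), (lamr i / mur i) ^ n / (Nat.factorial n : ℝ))))⁻¹ *
        ∏ i, unitWeight (lamT i) (muT i) (lamA i) (muA i) (lamr i) (mur i) (c i) (X i) = 1 := by
  classical
  set C : I → ℝ := fun i => (1 - lamT i / muT i)⁻¹ * (1 - lamA i / muA i)⁻¹ *
        (mur i * (lamr i / mur i) ^ c i /
            ((Nat.factorial (c i - 1) : ℝ) * (c i * mur i - lamr i)) +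
          ∑ n ∈ Finset.range (c i), (lamr i / mur i) ^ n / (Nat.factorial n : ℝ)) with hC
  have key : ∀ i, HasSum
      (unitWeight (lamT i) (muT i) (lamA i) (muA i) (lamr i) (mur i) (c i)) (C i) :=
    fun i => unit_hasSum' (hlamT i) (hmuT i) (hlamA i) (hmuA i) (hlamr i) (hmur i)
      (hc i) (hT i) (hA i) (hr i)
  obtain ⟨ι', ⟨eI⟩⟩ : ∃ ι' : Type, Nonempty (I ≃ ι') := ⟨ULift.{0} (Fin (Fintype.card I)),
    ⟨(Fintype.equivFin I).trans Equiv.ulift.symm⟩⟩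
  letI : Fintype ι' := Fintype.ofEquiv I eI
  have main0 := hasSum_pi' ι'
    (fun j => unitWeight (lamT (eI.symm j)) (muT (eI.symm j)) (lamA (eI.symm j))
      (muA (eI.symm j)) (lamr (eI.symm j)) (mur (eI.symm j)) (c (eI.symm j)))
    (fun j => C (eI.symm j)) (fun j => key (eI.symm j))
  have main : HasSum (fun X : I → ℕ × ℕ × ℕ =>
      ∏ i, unitWeight (lamT i) (muT i) (lamA i) (muA i) (lamr i) (mur i) (c i) (X i))
      (∏ i, C i) := by
    rw [← (eI.symm.arrowCongr (Equiv.refl (ℕ × ℕ × ℕ))).hasSum_iff]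
    have hfun : ((fun X : I → ℕ × ℕ × ℕ =>
        ∏ i, unitWeight (lamT i) (muT i) (lamA i) (muA i) (lamr i) (mur i) (c i) (X i)) ∘
          (eI.symm.arrowCongr (Equiv.refl (ℕ × ℕ × ℕ))))
        = fun X : ι' → ℕ × ℕ × ℕ => ∏ j, unitWeight (lamT (eI.symm j)) (muT (eI.symm j))
            (lamA (eI.symm j)) (muA (eI.symm j)) (lamr (eI.symm j)) (mur (eI.symm j))
            (c (eI.symm j)) (X j) := by
      funext X
      simp only [Function.comp_apply]
      rw [← Equiv.prod_comp eI.symm]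
      exact Fintype.prod_congr _ _ (fun j => by simp [Equiv.arrowCongr])
    rw [hfun, ← Equiv.prod_comp eI.symm C]
    exact main0
  have hCpos : ∀ i, 0 < C i := by
    intro i
    have h1 : 0 < 1 - lamT i / muT i := by
      rw [sub_pos, div_lt_one (hmuT i)]; exact hT i
    have h2 : 0 < 1 - lamA i / muA i := by
      rw [sub_pos, div_lt_one (hmuA i)]; exact hA i
    have hsub : (0 : ℝ) < c i * mur i - lamr i := by
      have := hr i; linarith
    have hfc1 : (0 : ℝ) < (Nat.factorial (c i - 1) : ℝ) := by
      exact_mod_cast Nat.factorial_pos _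
    have h3 : 0 < mur i * (lamr i / mur i) ^ c i /
        ((Nat.factorial (c i - 1) : ℝ) * (c i * mur i - lamr i)) := by
      exact div_pos (mul_pos (hmur i) (pow_pos (div_pos (hlamr i) (hmur i)) _))
        (mul_pos hfc1 hsub)
    have h4 : 0 ≤ ∑ n ∈ Finset.range (c i), (lamr i / mur i) ^ n / (Nat.factorial n : ℝ) := by
      refine Finset.sum_nonneg fun n _ => ?_
      have : 0 < lamr i / mur i := div_pos (hlamr i) (hmur i)
      positivity
    have := add_pos_of_pos_of_nonneg h3 h4
    positivity
  have hCne : (∏ i, C i) ≠ 0 := ne_of_gt (Finset.prod_pos fun i _ => hCpos i)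
  refine ⟨main.summable, main.tsum_eq, ?_⟩
  rw [tsum_mul_left, main.tsum_eq, inv_mul_cancel₀ hCne]
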